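/- Let π(u) = {p ∈ Π_Γ : P_Γ(u) = pᵀu + h_Γ(p)}. Then for every u ∈ ℝⁿ and every p ∈ π(u): (i) h_Γ(p) = −P*_Γ(p); (ii) p is a subgradient of P_Γ at u, i.e. π(u) ⊆ ∂P_Γ(u). In particular, if P_Γ is differentiable at u, then π(u) = {∇P_Γ(u)}, and hence all gradient vectors of P_Γ lie in Π_Γ. -/

import Mathlib

open Filter Topology Matrix
open scoped Classical

namespace Soft

/-! Basic notions for nearest-neighbour subshifts of finite type (NNSOFT) on `ℤ^d`:
boxes, allowed colorings, color counts, the grand partition function `Z_Γ(m,u)`. -/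

/-- The set of sites of the box `⟨m⟩ = [m₁] × ⋯ × [m_d]` (zero-indexed). -/
def box {d : ℕ} (m : Fin d → ℕ) : Set (Fin d → ℕ) := {x | ∀ i, x i < m i}

/-- The site `x + e_k`. -/
def step {d : ℕ} (x : Fin d → ℕ) (k : Fin d) : Fin d → ℕ :=
  Function.update x k (x k + 1)

/-- `vol(m) = m₁ ⋯ m_d`. -/
def vol {d : ℕ} (m : Fin d → ℕ) : ℕ := ∏ i, m i

/-- `φ` satisfies all nearest-neighbour constraints imposed by `Γ` inside the box `⟨m⟩`:
whenever `x` and `x + e_k` both lie in the box, `(φ x, φ (x + e_k)) ∈ Γ k`. -/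
def Allowed {d n : ℕ} (Γ : Fin d → Set (Fin n × Fin n)) (m : Fin d → ℕ)
    (φ : (Fin d → ℕ) → Fin n) : Prop :=
  ∀ x ∈ box m, ∀ k : Fin d, step x k ∈ box m → (φ x, φ (step x k)) ∈ Γ k

/-- `φ` takes the default color `0` outside the box `⟨m⟩`; colorings of `⟨m⟩` are represented
by functions on all of `ℕ^d` normalized in this way (so that there are finitely many). -/
def Normalized {d n : ℕ} [NeZero n] (m : Fin d → ℕ) (φ : (Fin d → ℕ) → Fin n) : Prop :=
  ∀ x, x ∉ box m → φ x = 0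

/-- `C_Γ(⟨m⟩)`: the set of `Γ`-allowed colorings of the box `⟨m⟩`. -/
def Col {d n : ℕ} [NeZero n] (Γ : Fin d → Set (Fin n × Fin n)) (m : Fin d → ℕ) :
    Set ((Fin d → ℕ) → Fin n) :=
  {φ | Allowed Γ m φ ∧ Normalized m φ}

/-- `Γ`-allowed colorings of the whole lattice `ℤ^d`. -/
def AllowedZ {d n : ℕ} (Γ : Fin d → Set (Fin n × Fin n)) (φ : (Fin d → ℤ) → Fin n) : Prop :=
  ∀ (x : Fin d → ℤ) (k : Fin d), (φ x, φ (Function.update x k (x k + 1))) ∈ Γ k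

/-- `c(φ)_j`: the number of sites of `⟨m⟩` colored `j` by `φ`. -/
noncomputable def cnt {d n : ℕ} (m : Fin d → ℕ) (φ : (Fin d → ℕ) → Fin n) (j : Fin n) : ℕ :=
  Nat.card {x : Fin d → ℕ // x ∈ box m ∧ φ x = j}

/-- The weight `exp (c(φ)ᵀ u)` of a coloring `φ` of `⟨m⟩`. -/
noncomputable def weight {d n : ℕ} (m : Fin d → ℕ) (φ : (Fin d → ℕ) → Fin n)
    (u : Fin n → ℝ) : ℝ :=
  Real.exp (∑ j, (cnt m φ j : ℝ) * u j)

/-- The grand partition function `Z_Γ(m,u) = Σ_{φ ∈ C_Γ(⟨m⟩)} exp (c(φ)ᵀ u)`. -/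
noncomputable def Z {d n : ℕ} [NeZero n] (Γ : Fin d → Set (Fin n × Fin n)) (m : Fin d → ℕ)
    (u : Fin n → ℝ) : ℝ :=
  ∑' φ : Col Γ m, weight m φ.1 u

/-! Density points and the density entropy. -/

/-- `p ∈ Π_Γ`: `p` is a probability vector arising as a limiting color-frequency vector of
allowed colorings of a sequence of boxes all whose sides tend to infinity. -/
def IsDensityPoint {d n : ℕ} [NeZero n] (Γ : Fin d → Set (Fin n × Fin n))
    (p : Fin n → ℝ) : Prop :=
  (∀ i, 0 ≤ p i) ∧ (∑ i, p i) = 1 ∧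
  ∃ (mq : ℕ → Fin d → ℕ) (cq : ℕ → Fin n → ℕ),
    Tendsto mq atTop atTop ∧
    (∀ q, (∑ i, cq q i) = vol (mq q)) ∧
    (∀ q, ∃ φ ∈ Col Γ (mq q), ∀ j, cnt (mq q) φ j = cq q j) ∧
    Tendsto (fun q => fun i => (cq q i : ℝ) / (vol (mq q) : ℝ)) atTop (𝓝 p)

/-- `#C_Γ(⟨m⟩, c)`: the number of `Γ`-allowed colorings of `⟨m⟩` with color-frequency
vector `c`. -/
noncomputable def NCol {d n : ℕ} [NeZero n] (Γ : Fin d → Set (Fin n × Fin n))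
    (m : Fin d → ℕ) (c : Fin n → ℕ) : ℕ :=
  Nat.card {φ : (Fin d → ℕ) → Fin n // φ ∈ Col Γ m ∧ ∀ j, cnt m φ j = c j}

/-- The density entropy `h_Γ(p)`: the supremum, over all sequences of boxes and
color-frequency vectors converging in frequency to `p`, of the exponential growth rate
`limsup_q log #C_Γ(⟨m_q⟩,c_q) / vol(m_q)`. -/
noncomputable def densityEntropy {d n : ℕ} [NeZero n] (Γ : Fin d → Set (Fin n × Fin n))
    (p : Fin n → ℝ) : ℝ :=
  sSup {h | ∃ (mq : ℕ → Fin d → ℕ) (cq : ℕ → Fin n → ℕ),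
    Tendsto mq atTop atTop ∧
    (∀ q, (∑ i, cq q i) = vol (mq q)) ∧
    (∀ q, ∃ φ ∈ Col Γ (mq q), ∀ j, cnt (mq q) φ j = cq q j) ∧
    Tendsto (fun q => fun i => (cq q i : ℝ) / (vol (mq q) : ℝ)) atTop (𝓝 p) ∧
    h = Filter.limsup
      (fun q => Real.log (NCol Γ (mq q) (cq q)) / (vol (mq q) : ℝ)) atTop}

/-- `y` is a subgradient of `f` at `u`. -/
def Subgrad {N : ℕ} (f : (Fin N → ℝ) → ℝ) (u y : Fin N → ℝ) : Prop :=
  ∀ z, f u + ∑ i, y i * (z i - u i) ≤ f z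

/-- The conjugate convex function `f*(p) = sup_u (pᵀu − f(u))`, with values in `EReal`. -/
noncomputable def conj {N : ℕ} (f : (Fin N → ℝ) → ℝ) (p : Fin N → ℝ) : EReal :=
  ⨆ u : Fin N → ℝ, (((∑ i, p i * u i) - f u : ℝ) : EReal)

/-- `π(u) = {p ∈ Π_Γ : P_Γ(u) = pᵀu + h_Γ(p)}`. -/
def piSet {d n : ℕ} [NeZero n] (Γ : Fin d → Set (Fin n × Fin n))
    (P : (Fin n → ℝ) → ℝ) (u : Fin n → ℝ) : Set (Fin n → ℝ) :=
  {p | IsDensityPoint Γ p ∧ P u = (∑ i, p i * u i) + densityEntropy Γ p}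

/-- The gradient vector associated with a continuous linear functional on `ℝⁿ`. -/
noncomputable def gradOf {N : ℕ} (L : (Fin N → ℝ) →L[ℝ] ℝ) : Fin N → ℝ :=
  fun i => L (Pi.single i 1)

section Helpers
set_option linter.unusedSectionVars false

variable {d n : ℕ} [NeZero n]

/-- The box as a Finset. -/
def boxFinset (m : Fin d → ℕ) : Finset (Fin d → ℕ) :=
  Fintype.piFinset fun i => Finset.range (m i)

lemma mem_boxFinset {m : Fin d → ℕ} {x : Fin d → ℕ} :
    x ∈ boxFinset m ↔ x ∈ box m := by
  simp only [boxFinset, Fintype.mem_piFinset, Finset.mem_range]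
  rfl

lemma card_boxFinset (m : Fin d → ℕ) : (boxFinset m).card = vol m := by
  simp [boxFinset, vol, Fintype.card_piFinset]

lemma cnt_eq_filter (m : Fin d → ℕ) (φ : (Fin d → ℕ) → Fin n) (j : Fin n) :
    cnt m φ j = ((boxFinset m).filter (fun x => φ x = j)).card := by
  have hset : {x : Fin d → ℕ | x ∈ box m ∧ φ x = j}
      = ↑((boxFinset m).filter (fun x => φ x = j)) := by
    ext x; simp [Finset.mem_filter, mem_boxFinset]
  have : cnt m φ j = Set.ncard {x : Fin d → ℕ | x ∈ box m ∧ φ x = j} := by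
    exact Nat.card_coe_set_eq _ |>.symm ▸ rfl
  rw [this, hset, Set.ncard_coe_finset]

lemma sum_cnt (m : Fin d → ℕ) (φ : (Fin d → ℕ) → Fin n) :
    (∑ j, cnt m φ j) = vol m := by
  simp only [cnt_eq_filter]
  rw [← Finset.card_eq_sum_card_fiberwise (fun x _ => Finset.mem_univ (φ x)),
    card_boxFinset]

lemma cnt_le_vol (m : Fin d → ℕ) (φ : (Fin d → ℕ) → Fin n) (j : Fin n) :
    cnt m φ j ≤ vol m := by
  rw [cnt_eq_filter, ← card_boxFinset]
  exact Finset.card_filter_le _ _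


/-- Restriction to the box is injective on normalized colorings. -/
lemma normalized_injOn (m : Fin d → ℕ) :
    Set.InjOn (fun (φ : (Fin d → ℕ) → Fin n) (x : ↥(boxFinset m)) => φ x.1)
      {φ | Normalized m φ} := by
  intro φ hφ ψ hψ h
  funext x
  by_cases hx : x ∈ box m
  · exact congrFun h ⟨x, mem_boxFinset.mpr hx⟩
  · rw [hφ x hx, hψ x hx]

lemma normalized_finite (m : Fin d → ℕ) :
    {φ : (Fin d → ℕ) → Fin n | Normalized m φ}.Finite :=
  Set.Finite.of_finite_image (Set.toFinite _) (normalized_injOn m)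

lemma col_finite (Γ : Fin d → Set (Fin n × Fin n)) (m : Fin d → ℕ) :
    (Col Γ m).Finite :=
  (normalized_finite m).subset fun φ hφ => hφ.2

lemma colcnt_finite (Γ : Fin d → Set (Fin n × Fin n)) (m : Fin d → ℕ) (c : Fin n → ℕ) :
    {φ : (Fin d → ℕ) → Fin n | φ ∈ Col Γ m ∧ ∀ j, cnt m φ j = c j}.Finite :=
  (col_finite Γ m).subset fun φ hφ => hφ.1

lemma NCol_eq_ncard (Γ : Fin d → Set (Fin n × Fin n)) (m : Fin d → ℕ) (c : Fin n → ℕ) :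
    NCol Γ m c = Set.ncard {φ : (Fin d → ℕ) → Fin n | φ ∈ Col Γ m ∧ ∀ j, cnt m φ j = c j} :=
  (Nat.card_coe_set_eq _).symm ▸ rfl

lemma NCol_le (Γ : Fin d → Set (Fin n × Fin n)) (m : Fin d → ℕ) (c : Fin n → ℕ) :
    NCol Γ m c ≤ n ^ vol m := by
  have hfin := colcnt_finite Γ m c
  have : Nat.card {φ : (Fin d → ℕ) → Fin n // φ ∈ Col Γ m ∧ ∀ j, cnt m φ j = c j}
      ≤ Nat.card (↥(boxFinset m) → Fin n) := by
    have inst : Finite {φ : (Fin d → ℕ) → Fin n // φ ∈ Col Γ m ∧ ∀ j, cnt m φ j = c j} :=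
      hfin.to_subtype
    apply Nat.card_le_card_of_injective
      (fun φ => fun x : ↥(boxFinset m) => φ.1 x.1)
    intro φ ψ h
    exact Subtype.ext (normalized_injOn m φ.2.1.2 ψ.2.1.2 h)
  calc NCol Γ m c ≤ Nat.card (↥(boxFinset m) → Fin n) := this
    _ = n ^ vol m := by
        rw [Nat.card_eq_fintype_card, Fintype.card_fun, Fintype.card_coe,
          card_boxFinset, Fintype.card_fin]

lemma NCol_pos (Γ : Fin d → Set (Fin n × Fin n)) (m : Fin d → ℕ) (c : Fin n → ℕ)
    (h : ∃ φ ∈ Col Γ m, ∀ j, cnt m φ j = c j) : 1 ≤ NCol Γ m c := by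
  obtain ⟨φ, hφ, hc⟩ := h
  have inst : Finite {φ : (Fin d → ℕ) → Fin n // φ ∈ Col Γ m ∧ ∀ j, cnt m φ j = c j} :=
    (colcnt_finite Γ m c).to_subtype
  have hne : Nonempty {φ : (Fin d → ℕ) → Fin n // φ ∈ Col Γ m ∧ ∀ j, cnt m φ j = c j} :=
    ⟨⟨φ, hφ, hc⟩⟩
  exact Nat.one_le_iff_ne_zero.mpr Nat.card_pos.ne'


/-- The allowed colorings of a box, as a Finset. -/
noncomputable def colFinset (Γ : Fin d → Set (Fin n × Fin n)) (m : Fin d → ℕ) :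
    Finset ((Fin d → ℕ) → Fin n) := (col_finite Γ m).toFinset

lemma Z_eq_sum (Γ : Fin d → Set (Fin n × Fin n)) (m : Fin d → ℕ) (u : Fin n → ℝ) :
    Z Γ m u = ∑ φ ∈ colFinset Γ m, weight m φ u := by
  have h : Col Γ m = ↑(colFinset Γ m) := by
    rw [colFinset, Set.Finite.coe_toFinset]
  rw [Z, h, Finset.tsum_subtype' (colFinset Γ m) (fun φ => weight m φ u)]

lemma NCol_eq_filter (Γ : Fin d → Set (Fin n × Fin n)) (m : Fin d → ℕ) (c : Fin n → ℕ) :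
    NCol Γ m c = ((colFinset Γ m).filter (fun φ => ∀ j, cnt m φ j = c j)).card := by
  rw [NCol_eq_ncard]
  have : {φ : (Fin d → ℕ) → Fin n | φ ∈ Col Γ m ∧ ∀ j, cnt m φ j = c j}
      = ↑((colFinset Γ m).filter (fun φ => ∀ j, cnt m φ j = c j)) := by
    ext φ
    simp [Finset.mem_filter, colFinset, Set.Finite.mem_toFinset]
  rw [this, Set.ncard_coe_finset]

lemma NCol_exp_le_Z (Γ : Fin d → Set (Fin n × Fin n)) (m : Fin d → ℕ) (c : Fin n → ℕ)
    (u : Fin n → ℝ) :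
    (NCol Γ m c : ℝ) * Real.exp (∑ j, (c j : ℝ) * u j) ≤ Z Γ m u := by
  rw [Z_eq_sum, NCol_eq_filter]
  calc ((((colFinset Γ m).filter (fun φ => ∀ j, cnt m φ j = c j)).card : ℝ))
        * Real.exp (∑ j, (c j : ℝ) * u j)
      = ∑ φ ∈ (colFinset Γ m).filter (fun φ => ∀ j, cnt m φ j = c j), weight m φ u := by
        have key : ∀ φ ∈ (colFinset Γ m).filter (fun φ => ∀ j, cnt m φ j = c j),
            weight m φ u = Real.exp (∑ j, (c j : ℝ) * u j) := by
          intro φ hφ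
          have h2 := (Finset.mem_filter.mp hφ).2
          unfold weight
          congr 1
          exact Finset.sum_congr rfl fun j _ => by rw [h2 j]
        rw [Finset.sum_congr rfl key, Finset.sum_const, nsmul_eq_mul]
    _ ≤ ∑ φ ∈ colFinset Γ m, weight m φ u := by
        apply Finset.sum_le_sum_of_subset_of_nonneg (Finset.filter_subset _ _)
        intro φ _ _
        exact (Real.exp_pos _).le


lemma col_nonempty {Γ : Fin d → Set (Fin n × Fin n)}
    (hne : ∃ φ : (Fin d → ℤ) → Fin n, AllowedZ Γ φ) (m : Fin d → ℕ) :
    ∃ φ, φ ∈ Col Γ m := by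
  obtain ⟨ψ, hψ⟩ := hne
  refine ⟨fun x => if x ∈ box m then ψ (fun i => (x i : ℤ)) else 0, ?_, ?_⟩
  · intro x hx k hxk
    simp only [if_pos hx, if_pos hxk]
    have hcast : (fun i => ((step x k i : ℕ) : ℤ))
        = Function.update (fun i => ((x i : ℕ) : ℤ)) k ((x k : ℤ) + 1) := by
      funext i
      by_cases hik : i = k
      · subst hik; simp [step]
      · simp [step, Function.update_of_ne hik]
    rw [hcast]
    exact hψ (fun i => (x i : ℤ)) k
  · intro x hx
    simp only [if_neg hx]

lemma Z_pos {Γ : Fin d → Set (Fin n × Fin n)}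
    (hne : ∃ φ : (Fin d → ℤ) → Fin n, AllowedZ Γ φ) (m : Fin d → ℕ) (u : Fin n → ℝ) :
    0 < Z Γ m u := by
  obtain ⟨φ, hφ⟩ := col_nonempty hne m
  rw [Z_eq_sum]
  apply Finset.sum_pos'
  · intro ψ _; exact (Real.exp_pos _).le
  · exact ⟨φ, by rwa [colFinset, Set.Finite.mem_toFinset], Real.exp_pos _⟩

/-- Decomposition of `Z` by color-count fibers, and the maximal-term bound. -/
lemma exists_good_c {Γ : Fin d → Set (Fin n × Fin n)}
    (hne : ∃ φ : (Fin d → ℤ) → Fin n, AllowedZ Γ φ) (m : Fin d → ℕ) (u : Fin n → ℝ) :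
    ∃ c : Fin n → ℕ, (∃ φ ∈ Col Γ m, ∀ j, cnt m φ j = c j) ∧
      Z Γ m u ≤ ((vol m + 1 : ℕ) : ℝ) ^ n *
        ((NCol Γ m c : ℝ) * Real.exp (∑ j, (c j : ℝ) * u j)) := by
  classical
  set F : Finset (Fin n → ℕ) := Fintype.piFinset (fun _ : Fin n => Finset.range (vol m + 1))
    with hF
  have hmaps : ∀ φ ∈ colFinset Γ m, (fun j => cnt m φ j) ∈ F := by
    intro φ _
    rw [hF, Fintype.mem_piFinset]
    intro j
    rw [Finset.mem_range]
    exact Nat.lt_succ_of_le (cnt_le_vol m φ j)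
  have hdecomp : Z Γ m u = ∑ c ∈ F, ∑ φ ∈ (colFinset Γ m).filter
      (fun φ => (fun j => cnt m φ j) = c), weight m φ u := by
    rw [Z_eq_sum, Finset.sum_fiberwise_of_maps_to hmaps]
  -- inner sums equal NCol * exp
  have hinner : ∀ c : Fin n → ℕ, ∑ φ ∈ (colFinset Γ m).filter
      (fun φ => (fun j => cnt m φ j) = c), weight m φ u
      = (NCol Γ m c : ℝ) * Real.exp (∑ j, (c j : ℝ) * u j) := by
    intro c
    have hfe : ((colFinset Γ m).filter (fun φ => (fun j => cnt m φ j) = c))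
        = ((colFinset Γ m).filter (fun φ => ∀ j, cnt m φ j = c j)) := by
      apply Finset.filter_congr
      intro φ _
      simp [funext_iff]
    rw [hfe]
    have key : ∀ φ ∈ (colFinset Γ m).filter (fun φ => ∀ j, cnt m φ j = c j),
        weight m φ u = Real.exp (∑ j, (c j : ℝ) * u j) := by
      intro φ hφ
      have h2 := (Finset.mem_filter.mp hφ).2
      unfold weight
      congr 1
      exact Finset.sum_congr rfl fun j _ => by rw [h2 j]
    rw [Finset.sum_congr rfl key, Finset.sum_const, nsmul_eq_mul, NCol_eq_filter]
  -- pick the maximizer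
  have hFne : F.Nonempty := ⟨fun _ => 0, by simp [hF]⟩
  obtain ⟨c, hcF, hcmax⟩ := F.exists_max_image
    (fun c => (NCol Γ m c : ℝ) * Real.exp (∑ j, (c j : ℝ) * u j)) hFne
  have hZle : Z Γ m u ≤ F.card * ((NCol Γ m c : ℝ) * Real.exp (∑ j, (c j : ℝ) * u j)) := by
    rw [hdecomp]
    calc ∑ c' ∈ F, ∑ φ ∈ (colFinset Γ m).filter (fun φ => (fun j => cnt m φ j) = c'),
          weight m φ u
        = ∑ c' ∈ F, (NCol Γ m c' : ℝ) * Real.exp (∑ j, (c' j : ℝ) * u j) := by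
          exact Finset.sum_congr rfl fun c' _ => hinner c'
      _ ≤ ∑ _c' ∈ F, (NCol Γ m c : ℝ) * Real.exp (∑ j, (c j : ℝ) * u j) :=
          Finset.sum_le_sum fun c' hc' => hcmax c' hc'
      _ = F.card * ((NCol Γ m c : ℝ) * Real.exp (∑ j, (c j : ℝ) * u j)) := by
          rw [Finset.sum_const, nsmul_eq_mul]
  have hcard : (F.card : ℝ) = ((vol m + 1 : ℕ) : ℝ) ^ n := by
    rw [hF, Fintype.card_piFinset]
    push_cast
    simp
  refine ⟨c, ?_, by rwa [hcard] at hZle⟩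
  -- NCol c ≥ 1 since Z > 0
  by_contra hcon
  push_neg at hcon
  have hN0 : NCol Γ m c = 0 := by
    rw [NCol_eq_ncard]
    rw [Set.ncard_eq_zero ((colcnt_finite Γ m c))]
    ext φ
    simp only [Set.mem_setOf_eq, Set.mem_empty_iff_false, iff_false]
    intro hφ
    obtain ⟨j, hj⟩ := hcon φ hφ.1
    exact hj (hφ.2 j)
  have := Z_pos hne m u
  rw [hN0] at hZle
  simp at hZle
  linarith


/-- Real-sequence limsup comparison against a convergent lower bound. -/
lemma limsup_ge_of_le {a g : ℕ → ℝ} {G : ℝ} (hle : ∀ᶠ q in atTop, g q ≤ a q)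
    (hg : Tendsto g atTop (𝓝 G)) (hbdd : IsBoundedUnder (· ≤ ·) atTop a) :
    G ≤ Filter.limsup a atTop := by
  rw [← hg.limsup_eq]
  exact limsup_le_limsup hle hg.isCoboundedUnder_le hbdd

/-- Real-sequence limsup comparison against a convergent upper bound. -/
lemma limsup_le_of_le {a g : ℕ → ℝ} {G : ℝ} (hle : ∀ᶠ q in atTop, a q ≤ g q)
    (hg : Tendsto g atTop (𝓝 G)) (hbdd : IsCoboundedUnder (· ≤ ·) atTop a) :
    Filter.limsup a atTop ≤ G := by
  rw [← hg.limsup_eq]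
  exact limsup_le_limsup hle hbdd hg.isBoundedUnder_le

lemma eventually_vol_pos {mq : ℕ → Fin d → ℕ} (hm : Tendsto mq atTop atTop) :
    ∀ᶠ q in atTop, 1 ≤ vol (mq q) := by
  filter_upwards [hm.eventually_ge_atTop (fun _ => 1)] with q hq
  have : ∀ i, 0 < mq q i := fun i => hq i
  calc 1 = ∏ _i : Fin d, 1 := by simp
    _ ≤ ∏ i, mq q i := Finset.prod_le_prod' fun i _ => this i

/-- Key upper bound: the growth rate of any admissible sequence is at most
`P z − pᵀz` for every `z`. -/
lemma limsup_le_bound {Γ : Fin d → Set (Fin n × Fin n)} {P : (Fin n → ℝ) → ℝ}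
    (hP : ∀ u, Tendsto (fun m : Fin d → ℕ =>
        Real.log (Z Γ m u) / (vol m : ℝ)) atTop (𝓝 (P u)))
    {mq : ℕ → Fin d → ℕ} {cq : ℕ → Fin n → ℕ} {p : Fin n → ℝ} (z : Fin n → ℝ)
    (hm : Tendsto mq atTop atTop)
    (hex : ∀ q, ∃ φ ∈ Col Γ (mq q), ∀ j, cnt (mq q) φ j = cq q j)
    (hfreq : Tendsto (fun q => fun i => (cq q i : ℝ) / (vol (mq q) : ℝ)) atTop (𝓝 p)) :
    Filter.limsup (fun q => Real.log (NCol Γ (mq q) (cq q)) / (vol (mq q) : ℝ)) atTop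
      ≤ P z - ∑ i, p i * z i := by
  have hN : ∀ q, 1 ≤ NCol Γ (mq q) (cq q) := fun q => NCol_pos _ _ _ (hex q)
  have hvol := eventually_vol_pos hm
  set a : ℕ → ℝ := fun q => Real.log (NCol Γ (mq q) (cq q)) / (vol (mq q) : ℝ) with ha
  set g : ℕ → ℝ := fun q => Real.log (Z Γ (mq q) z) / (vol (mq q) : ℝ)
    - ∑ i, ((cq q i : ℝ) / (vol (mq q) : ℝ)) * z i with hg
  have hle : ∀ᶠ q in atTop, a q ≤ g q := by
    filter_upwards [hvol] with q hq
    have hv : (0 : ℝ) < (vol (mq q) : ℝ) := by exact_mod_cast hq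
    have hNpos : (0 : ℝ) < (NCol Γ (mq q) (cq q) : ℝ) := by exact_mod_cast hN q
    have hZ : (NCol Γ (mq q) (cq q) : ℝ) * Real.exp (∑ j, (cq q j : ℝ) * z j)
        ≤ Z Γ (mq q) z := NCol_exp_le_Z _ _ _ _
    have hlog : Real.log (NCol Γ (mq q) (cq q)) + ∑ j, (cq q j : ℝ) * z j
        ≤ Real.log (Z Γ (mq q) z) := by
      have := Real.log_le_log (by positivity) hZ
      rwa [Real.log_mul hNpos.ne' (Real.exp_pos _).ne', Real.log_exp] at this
    have hsum : ∑ i, ((cq q i : ℝ) / (vol (mq q) : ℝ)) * z i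
        = (∑ j, (cq q j : ℝ) * z j) / (vol (mq q) : ℝ) := by
      rw [Finset.sum_div]
      exact Finset.sum_congr rfl fun i _ => by ring
    rw [ha, hg]
    simp only
    rw [hsum, div_sub_div_same]
    exact (div_le_div_iff_of_pos_right hv).mpr (by linarith)
  have hgG : Tendsto g atTop (𝓝 (P z - ∑ i, p i * z i)) := by
    apply Tendsto.sub ((hP z).comp hm)
    apply tendsto_finset_sum
    intro i _
    exact ((tendsto_pi_nhds.mp hfreq i)).mul_const (z i)
  have hbdd : ∀ᶠ q in atTop, 0 ≤ a q := by
    filter_upwards [hvol] with q hq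
    have hv : (0 : ℝ) < (vol (mq q) : ℝ) := by exact_mod_cast hq
    apply div_nonneg _ hv.le
    exact Real.log_nonneg (by exact_mod_cast hN q)
  have hcob : IsCoboundedUnder (· ≤ ·) atTop a :=
    IsBoundedUnder.isCoboundedUnder_le ⟨0, by
      rw [Filter.eventually_map] at *
      exact hbdd⟩
  exact limsup_le_of_le hle hgG hcob


lemma densityEntropy_le {Γ : Fin d → Set (Fin n × Fin n)} {P : (Fin n → ℝ) → ℝ}
    (hP : ∀ u, Tendsto (fun m : Fin d → ℕ =>
        Real.log (Z Γ m u) / (vol m : ℝ)) atTop (𝓝 (P u)))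
    {p : Fin n → ℝ} (hp : IsDensityPoint Γ p) (z : Fin n → ℝ) :
    densityEntropy Γ p ≤ P z - ∑ i, p i * z i := by
  obtain ⟨hpos, hsum1, mq, cq, hm, hsum, hex, hfreq⟩ := hp
  refine csSup_le ⟨Filter.limsup
    (fun q => Real.log ((NCol Γ (mq q) (cq q) : ℕ) : ℝ) / (vol (mq q) : ℝ)) atTop,
    mq, cq, hm, hsum, hex, hfreq, rfl⟩ ?_
  rintro h ⟨mq', cq', hm', hsum', hex', hfreq', rfl⟩
  exact limsup_le_bound hP z hm' hex' hfreq'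

lemma subgrad_eq_grad {N : ℕ} {P : (Fin N → ℝ) → ℝ} {L : (Fin N → ℝ) →L[ℝ] ℝ}
    {u y : Fin N → ℝ} (hL : HasFDerivAt P L u) (hy : Subgrad P u y) :
    y = gradOf L := by
  have key : ∀ v : Fin N → ℝ, ∑ i, y i * v i ≤ L v := by
    intro v
    have h1 : HasDerivAt (fun t : ℝ => u + t • v) v 0 := by
      simpa using ((hasDerivAt_id (0 : ℝ)).smul_const v).const_add u
    have hline : HasDerivAt (fun t : ℝ => P (u + t • v)) (L v) 0 := by
      have h2 : HasFDerivAt P L (u + (0 : ℝ) • v) := by simpa using hL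
      exact h2.comp_hasDerivAt 0 h1
    have hslope := hasDerivAt_iff_tendsto_slope.mp hline
    have hslope' : Tendsto (slope (fun t : ℝ => P (u + t • v)) 0)
        (𝓝[>] 0) (𝓝 (L v)) :=
      hslope.mono_left (nhdsWithin_mono 0 fun t ht => ne_of_gt ht)
    apply ge_of_tendsto hslope'
    rw [eventually_nhdsWithin_iff]
    apply Filter.Eventually.of_forall
    intro t ht
    have hsg := hy (u + t • v)
    have hsum : ∑ i, y i * ((u + t • v) i - u i) = t * ∑ i, y i * v i := by
      rw [Finset.mul_sum]
      apply Finset.sum_congr rfl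
      intro i _
      simp only [Pi.add_apply, Pi.smul_apply, smul_eq_mul]
      ring
    rw [hsum] at hsg
    have ht' : (0 : ℝ) < t := ht
    show ∑ i, y i * v i ≤ slope (fun t : ℝ => P (u + t • v)) 0 t
    rw [slope_def_field]
    simp only [sub_zero, zero_smul, add_zero]
    rw [le_div_iff₀ ht']
    rw [mul_comm]
    linarith
  have keyeq : ∀ v : Fin N → ℝ, ∑ i, y i * v i = L v := by
    intro v
    have h1 := key v
    have h2 := key (-v)
    rw [map_neg] at h2
    have heq : ∑ i, y i * (-v) i = -∑ i, y i * v i := by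
      simp [mul_neg]
    rw [heq] at h2
    linarith
  funext i
  show y i = L (Pi.single i 1)
  rw [← keyeq (Pi.single i 1)]
  rw [Finset.sum_eq_single i (fun j _ hj => by simp [Pi.single_apply, hj]) (by simp)]
  simp


lemma tendsto_log_succ_div : Tendsto (fun k : ℕ => Real.log ((k : ℝ) + 1) / (k : ℝ))
    atTop (𝓝 0) := by
  have hlogk : Tendsto (fun k : ℕ => Real.log k / (k : ℝ)) atTop (𝓝 0) :=
    (Real.isLittleO_log_id_atTop.tendsto_div_nhds_zero).comp tendsto_natCast_atTop_atTop
  have hinv : Tendsto (fun k : ℕ => ((k : ℝ))⁻¹) atTop (𝓝 0) :=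
    tendsto_inv_atTop_nhds_zero_nat
  have hupper : Tendsto (fun k : ℕ => Real.log 2 * ((k : ℝ))⁻¹ + Real.log k / (k : ℝ))
      atTop (𝓝 0) := by
    have := (hinv.const_mul (Real.log 2)).add hlogk
    simpa using this
  apply tendsto_of_tendsto_of_tendsto_of_le_of_le' tendsto_const_nhds hupper
  · filter_upwards [eventually_ge_atTop 1] with k hk
    have hk1 : (1 : ℝ) ≤ (k : ℝ) := by exact_mod_cast hk
    apply div_nonneg (Real.log_nonneg (by linarith)) (by linarith)
  · filter_upwards [eventually_ge_atTop 1] with k hk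
    have hk1 : (1 : ℝ) ≤ (k : ℝ) := by exact_mod_cast hk
    have hle : Real.log ((k : ℝ) + 1) ≤ Real.log 2 + Real.log k := by
      rw [← Real.log_mul (by norm_num) (by linarith)]
      apply Real.log_le_log (by linarith)
      linarith
    calc Real.log ((k : ℝ) + 1) / (k : ℝ) ≤ (Real.log 2 + Real.log k) / (k : ℝ) :=
          (div_le_div_iff_of_pos_right (by linarith : (0:ℝ) < (k : ℝ))).mpr hle
      _ = Real.log 2 * ((k : ℝ))⁻¹ + Real.log k / (k : ℝ) := by ring

/-- Existence of an equilibrium density point: `π(u)` is nonempty. -/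
lemma exists_piSet_mem (hd : 0 < d) {Γ : Fin d → Set (Fin n × Fin n)}
    (hne : ∃ φ : (Fin d → ℤ) → Fin n, AllowedZ Γ φ) {P : (Fin n → ℝ) → ℝ}
    (hP : ∀ u, Tendsto (fun m : Fin d → ℕ =>
        Real.log (Z Γ m u) / (vol m : ℝ)) atTop (𝓝 (P u)))
    (u : Fin n → ℝ) : ∃ p, p ∈ piSet Γ P u := by
  classical
  set mq : ℕ → Fin d → ℕ := fun q => fun _ => q + 1 with hmq
  have hm : Tendsto mq atTop atTop := by
    rw [tendsto_atTop]
    intro b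
    filter_upwards [eventually_ge_atTop (Finset.univ.sup b)] with q hq
    intro i
    calc b i ≤ Finset.univ.sup b := Finset.le_sup (Finset.mem_univ i)
      _ ≤ q := hq
      _ ≤ q + 1 := Nat.le_succ q
  have hvol_eq : ∀ q, vol (mq q) = (q + 1) ^ d := by
    intro q; simp [hmq, vol, Finset.prod_const]
  have hvol_ge : ∀ q, q + 1 ≤ vol (mq q) := by
    intro q; rw [hvol_eq]; exact Nat.le_self_pow hd.ne' _
  have hvol_pos : ∀ q, 1 ≤ vol (mq q) := fun q => le_trans (Nat.succ_le_succ (Nat.zero_le q)) (hvol_ge q)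
  set cq : ℕ → Fin n → ℕ := fun q => (exists_good_c hne (mq q) u).choose with hcq
  have hgood : ∀ q, (∃ φ ∈ Col Γ (mq q), ∀ j, cnt (mq q) φ j = cq q j) ∧
      Z Γ (mq q) u ≤ ((vol (mq q) + 1 : ℕ) : ℝ) ^ n *
        ((NCol Γ (mq q) (cq q) : ℝ) * Real.exp (∑ j, (cq q j : ℝ) * u j)) :=
    fun q => (exists_good_c hne (mq q) u).choose_spec
  have hsumq : ∀ q, (∑ i, cq q i) = vol (mq q) := by
    intro q
    obtain ⟨φ, hφ, hc⟩ := (hgood q).1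
    rw [← sum_cnt (mq q) φ]
    exact Finset.sum_congr rfl fun j _ => (hc j).symm
  -- frequencies live in the compact cube [0,1]^n
  have hmem : ∀ q, (fun i => ((cq q i : ℝ) / (vol (mq q) : ℝ)))
      ∈ Set.Icc (0 : Fin n → ℝ) 1 := by
    intro q
    rw [Set.mem_Icc]
    constructor <;> rw [Pi.le_def] <;> intro i <;>
      simp only [Pi.zero_apply, Pi.one_apply]
    · have : (0:ℝ) ≤ (vol (mq q) : ℝ) := by positivity
      exact div_nonneg (by positivity) this
    · have hv : (0:ℝ) < (vol (mq q) : ℝ) := by exact_mod_cast hvol_pos q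
      rw [div_le_one hv]
      have : cq q i ≤ vol (mq q) := by
        rw [← hsumq q]
        exact Finset.single_le_sum (fun j _ => Nat.zero_le _) (Finset.mem_univ i)
      exact_mod_cast this
  obtain ⟨p, hpIcc, ψ, hψmono, hψtend⟩ :=
    (isCompact_Icc (a := (0 : Fin n → ℝ)) (b := 1)).tendsto_subseq hmem
  set Mq : ℕ → Fin d → ℕ := mq ∘ ψ with hMq
  set Cq : ℕ → Fin n → ℕ := cq ∘ ψ with hCq
  have hm' : Tendsto Mq atTop atTop := hm.comp hψmono.tendsto_atTop
  have hfreq : Tendsto (fun q => fun i => ((Cq q i : ℝ) / (vol (Mq q) : ℝ)))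
      atTop (𝓝 p) := hψtend
  have hex' : ∀ q, ∃ φ ∈ Col Γ (Mq q), ∀ j, cnt (Mq q) φ j = Cq q j :=
    fun q => (hgood (ψ q)).1
  have hsum' : ∀ q, (∑ i, Cq q i) = vol (Mq q) := fun q => hsumq (ψ q)
  -- p is a density point
  have hp : IsDensityPoint Γ p := by
    refine ⟨fun i => hpIcc.1 i, ?_, Mq, Cq, hm', hsum', hex', hfreq⟩
    have hone : ∀ q, (∑ i, ((Cq q i : ℝ) / (vol (Mq q) : ℝ))) = 1 := by
      intro q
      have hv : ((vol (Mq q) : ℝ)) ≠ 0 := by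
        have := hvol_pos (ψ q)
        simp only [hMq, Function.comp_apply]
        positivity
      rw [← Finset.sum_div]
      have hcast : (∑ i, ((Cq q i : ℝ))) = ((vol (Mq q) : ℝ)) := by
        exact_mod_cast hsum' q
      rw [hcast]
      exact div_self hv
    have h1 : Tendsto (fun q => ∑ i, ((Cq q i : ℝ) / (vol (Mq q) : ℝ))) atTop
        (𝓝 (∑ i, p i)) :=
      tendsto_finset_sum _ fun i _ => tendsto_pi_nhds.mp hfreq i
    have h2 : Tendsto (fun q => ∑ i, ((Cq q i : ℝ) / (vol (Mq q) : ℝ))) atTop (𝓝 1) := by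
      simp only [hone]
      exact tendsto_const_nhds
    exact tendsto_nhds_unique h1 h2
  -- lower bound on the growth rate along this sequence
  set a : ℕ → ℝ := fun q => Real.log ((NCol Γ (Mq q) (Cq q) : ℕ) : ℝ) / (vol (Mq q) : ℝ)
    with haa
  have hE : P u - ∑ i, p i * u i ≤ Filter.limsup a atTop := by
    set g : ℕ → ℝ := fun q => Real.log (Z Γ (Mq q) u) / (vol (Mq q) : ℝ)
      - (n : ℝ) * (Real.log ((vol (Mq q) : ℝ) + 1) / (vol (Mq q) : ℝ))
      - ∑ i, ((Cq q i : ℝ) / (vol (Mq q) : ℝ)) * u i with hgg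
    have hle : ∀ᶠ q in atTop, g q ≤ a q := by
      apply Filter.Eventually.of_forall
      intro q
      have hv : (0:ℝ) < (vol (Mq q) : ℝ) := by exact_mod_cast hvol_pos (ψ q)
      have hNpos : (0:ℝ) < ((NCol Γ (Mq q) (Cq q) : ℕ) : ℝ) := by
        exact_mod_cast NCol_pos _ _ _ (hex' q)
      have hZpos := Z_pos hne (Mq q) u
      have hZle : Z Γ (Mq q) u ≤ ((vol (Mq q) + 1 : ℕ) : ℝ) ^ n *
          ((NCol Γ (Mq q) (Cq q) : ℝ) * Real.exp (∑ j, (Cq q j : ℝ) * u j)) :=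
        (hgood (ψ q)).2
      have hlog : Real.log (Z Γ (Mq q) u) ≤ (n : ℝ) * Real.log ((vol (Mq q) : ℝ) + 1)
          + Real.log ((NCol Γ (Mq q) (Cq q) : ℕ) : ℝ) + ∑ j, (Cq q j : ℝ) * u j := by
        have h1 := Real.log_le_log hZpos hZle
        rw [Real.log_mul (by positivity) (by positivity),
          Real.log_mul hNpos.ne' (Real.exp_pos _).ne', Real.log_exp,
          Real.log_pow] at h1
        push_cast at h1 ⊢
        linarith
      have hsumdiv : ∑ i, ((Cq q i : ℝ) / (vol (Mq q) : ℝ)) * u i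
          = (∑ j, (Cq q j : ℝ) * u j) / (vol (Mq q) : ℝ) := by
        rw [Finset.sum_div]
        exact Finset.sum_congr rfl fun i _ => by ring
      rw [hgg, haa]
      simp only
      rw [hsumdiv]
      have hrew : Real.log (Z Γ (Mq q) u) / (vol (Mq q) : ℝ)
          - (n : ℝ) * (Real.log ((vol (Mq q) : ℝ) + 1) / (vol (Mq q) : ℝ))
          - (∑ j, (Cq q j : ℝ) * u j) / (vol (Mq q) : ℝ)
          = (Real.log (Z Γ (Mq q) u) - (n : ℝ) * Real.log ((vol (Mq q) : ℝ) + 1)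
            - ∑ j, (Cq q j : ℝ) * u j) / (vol (Mq q) : ℝ) := by ring
      rw [hrew]
      exact (div_le_div_iff_of_pos_right hv).mpr (by linarith)
    have hvt : Tendsto (fun q => vol (Mq q)) atTop atTop := by
      apply tendsto_atTop_mono (fun q => ?_) tendsto_id
      calc (id q : ℕ) ≤ ψ q := hψmono.le_apply
        _ ≤ ψ q + 1 := Nat.le_succ _
        _ ≤ vol (mq (ψ q)) := hvol_ge (ψ q)
    have hmid : Tendsto (fun q => (n : ℝ) *
        (Real.log ((vol (Mq q) : ℝ) + 1) / (vol (Mq q) : ℝ))) atTop (𝓝 0) := by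
      have := (tendsto_log_succ_div.comp hvt).const_mul (n : ℝ)
      simpa using this
    have hdot : Tendsto (fun q => ∑ i, ((Cq q i : ℝ) / (vol (Mq q) : ℝ)) * u i)
        atTop (𝓝 (∑ i, p i * u i)) :=
      tendsto_finset_sum _ fun i _ => (tendsto_pi_nhds.mp hfreq i).mul_const (u i)
    have hgtend : Tendsto g atTop (𝓝 (P u - ∑ i, p i * u i)) := by
      have := (((hP u).comp hm').sub hmid).sub hdot
      simpa using this
    have hbdd : IsBoundedUnder (· ≤ ·) atTop a := by
      refine ⟨Real.log n, ?_⟩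
      rw [Filter.eventually_map]
      apply Filter.Eventually.of_forall
      intro q
      have hv : (0:ℝ) < (vol (Mq q) : ℝ) := by exact_mod_cast hvol_pos (ψ q)
      have hNpos : (0:ℝ) < ((NCol Γ (Mq q) (Cq q) : ℕ) : ℝ) := by
        exact_mod_cast NCol_pos _ _ _ (hex' q)
      have hNle : ((NCol Γ (Mq q) (Cq q) : ℕ) : ℝ) ≤ ((n : ℝ)) ^ (vol (Mq q)) := by
        exact_mod_cast NCol_le Γ (Mq q) (Cq q)
      have hlogN : Real.log ((NCol Γ (Mq q) (Cq q) : ℕ) : ℝ)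
          ≤ (vol (Mq q) : ℝ) * Real.log n := by
        have := Real.log_le_log hNpos hNle
        rwa [Real.log_pow] at this
      rw [haa]
      simp only
      rw [div_le_iff₀ hv]
      calc Real.log ((NCol Γ (Mq q) (Cq q) : ℕ) : ℝ)
          ≤ (vol (Mq q) : ℝ) * Real.log n := hlogN
        _ = Real.log n * (vol (Mq q) : ℝ) := by ring
    exact limsup_ge_of_le hle hgtend hbdd
  -- conclude
  have hub := densityEntropy_le hP hp u
  have hlb : P u - ∑ i, p i * u i ≤ densityEntropy Γ p := by
    have hmemS : Filter.limsup a atTop ∈ {h | ∃ (mq : ℕ → Fin d → ℕ) (cq : ℕ → Fin n → ℕ),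
        Tendsto mq atTop atTop ∧
        (∀ q, (∑ i, cq q i) = vol (mq q)) ∧
        (∀ q, ∃ φ ∈ Col Γ (mq q), ∀ j, cnt (mq q) φ j = cq q j) ∧
        Tendsto (fun q => fun i => (cq q i : ℝ) / (vol (mq q) : ℝ)) atTop (𝓝 p) ∧
        h = Filter.limsup
          (fun q => Real.log (NCol Γ (mq q) (cq q)) / (vol (mq q) : ℝ)) atTop} :=
      ⟨Mq, Cq, hm', hsum', hex', hfreq, rfl⟩
    have hbddS : BddAbove {h | ∃ (mq : ℕ → Fin d → ℕ) (cq : ℕ → Fin n → ℕ),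
        Tendsto mq atTop atTop ∧
        (∀ q, (∑ i, cq q i) = vol (mq q)) ∧
        (∀ q, ∃ φ ∈ Col Γ (mq q), ∀ j, cnt (mq q) φ j = cq q j) ∧
        Tendsto (fun q => fun i => (cq q i : ℝ) / (vol (mq q) : ℝ)) atTop (𝓝 p) ∧
        h = Filter.limsup
          (fun q => Real.log (NCol Γ (mq q) (cq q)) / (vol (mq q) : ℝ)) atTop} := by
      refine ⟨P u - ∑ i, p i * u i, ?_⟩
      rintro h ⟨mq', cq', h1, h2, h3, h4, rfl⟩
      exact limsup_le_bound hP u h1 h3 h4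
    exact hE.trans (le_csSup hbddS hmemS)
  exact ⟨p, hp, by linarith⟩

end Helpers

/-- For every `u ∈ ℝⁿ` and every `p ∈ π(u)`:
(i) `h_Γ(p) = −P*_Γ(p)`; (ii) `p` is a subgradient of `P_Γ` at `u`.  In particular, if
`P_Γ` is differentiable at `u` (with derivative `L`, gradient `∇P_Γ(u) = gradOf L`),
then `π(u) = {∇P_Γ(u)}` and `∇P_Γ(u)` is a density point. -/
theorem piSet_properties
    (d n : ℕ) (hd : 0 < d) [NeZero n]
    (Γ : Fin d → Set (Fin n × Fin n))
    (hne : ∃ φ : (Fin d → ℤ) → Fin n, AllowedZ Γ φ)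
    (P : (Fin n → ℝ) → ℝ)
    (hP : ∀ u, Tendsto (fun m : Fin d → ℕ =>
        Real.log (Z Γ m u) / (vol m : ℝ)) atTop (𝓝 (P u))) :
    (∀ u : Fin n → ℝ, ∀ p ∈ piSet Γ P u,
      ((densityEntropy Γ p : ℝ) : EReal) = - conj P p ∧ Subgrad P u p) ∧
    (∀ (u : Fin n → ℝ) (L : (Fin n → ℝ) →L[ℝ] ℝ), HasFDerivAt P L u →
      piSet Γ P u = {gradOf L} ∧ IsDensityPoint Γ (gradOf L)) := by
  have part1 : ∀ u : Fin n → ℝ, ∀ p ∈ piSet Γ P u,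
      ((densityEntropy Γ p : ℝ) : EReal) = - conj P p ∧ Subgrad P u p := by
    intro u p hp
    obtain ⟨hdp, heq⟩ := hp
    have hle : ∀ z, densityEntropy Γ p ≤ P z - ∑ i, p i * z i :=
      fun z => densityEntropy_le hP hdp z
    have hsub : Subgrad P u p := by
      intro z
      have h1 := hle z
      have h2 : ∑ i, p i * (z i - u i) = (∑ i, p i * z i) - ∑ i, p i * u i := by
        rw [← Finset.sum_sub_distrib]
        exact Finset.sum_congr rfl fun i _ => by ring
      rw [h2]
      linarith
    refine ⟨?_, hsub⟩
    have hconj : conj P p = ((-(densityEntropy Γ p) : ℝ) : EReal) := by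
      apply le_antisymm
      · apply iSup_le
        intro z
        have := hle z
        exact_mod_cast EReal.coe_le_coe_iff.mpr (by linarith)
      · have hval : ((((∑ i, p i * u i) - P u : ℝ)) : EReal)
            = ((-(densityEntropy Γ p) : ℝ) : EReal) := by
          norm_cast
          linarith
        rw [← hval]
        exact le_iSup (fun z => (((∑ i, p i * z i) - P z : ℝ) : EReal)) u
    rw [hconj, EReal.coe_neg, neg_neg]
  refine ⟨part1, ?_⟩
  intro u L hL
  obtain ⟨p₀, hp₀⟩ := exists_piSet_mem hd hne hP u
  have hgrad : ∀ p ∈ piSet Γ P u, p = gradOf L :=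
    fun p hp => subgrad_eq_grad hL ((part1 u p hp).2)
  have hp0g : p₀ = gradOf L := hgrad p₀ hp₀
  constructor
  · ext p
    simp only [Set.mem_singleton_iff]
    constructor
    · exact fun h => hgrad p h
    · rintro rfl
      exact hp0g ▸ hp₀
  · exact hp0g ▸ hp₀.1

end Soft
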